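/- Fix a student i ∈ {1,…,n}. For every t ≥ 0, the expected transient net reward of student i computed in the original chain equals that computed in the lumped chain: ∑_{x ∈ S} R^{l,i}(x) · π^t(x) = ∑_{a=0}^{M} R̄^{l,i}(a) · π̄ᵢ^t(a). -/

import Mathlib

open scoped BigOperators

noncomputable def Qoff (n M : ℕ) (lam : Fin n → ℝ) (mu : ℝ)
    (x y : Fin n → Fin (M+1)) : ℝ :=
  (∑ j : Fin n,
      if (y j : ℕ) = (x j : ℕ) + 1 ∧ (∀ k, k ≠ j → y k = x k) then lam j else 0)
  + (if y = (fun _ => 0) ∧ x ≠ (fun _ => 0) then mu else 0)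

noncomputable def Qgen (n M : ℕ) (lam : Fin n → ℝ) (mu : ℝ)
    (x y : Fin n → Fin (M+1)) : ℝ :=
  if x = y then -∑ z ∈ Finset.univ.erase x, Qoff n M lam mu x z
  else Qoff n M lam mu x y

noncomputable def QbarOff (M : ℕ) (lam mu : ℝ) (a b : Fin (M+1)) : ℝ :=
  (if (b : ℕ) = (a : ℕ) + 1 then lam else 0) + (if b = 0 ∧ a ≠ 0 then mu else 0)

noncomputable def Qbar (M : ℕ) (lam mu : ℝ) (a b : Fin (M+1)) : ℝ :=
  if a = b then -∑ c ∈ Finset.univ.erase a, QbarOff M lam mu a c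
  else QbarOff M lam mu a b

noncomputable def Pmat (n M : ℕ) (lam : Fin n → ℝ) (mu qhat : ℝ) :
    Matrix (Fin n → Fin (M+1)) (Fin n → Fin (M+1)) ℝ :=
  1 + qhat⁻¹ • Matrix.of (Qgen n M lam mu)

noncomputable def PbarMat (M : ℕ) (lam mu qhat : ℝ) :
    Matrix (Fin (M+1)) (Fin (M+1)) ℝ :=
  1 + qhat⁻¹ • Matrix.of (Qbar M lam mu)

noncomputable def delta0 (n M : ℕ) : (Fin n → Fin (M+1)) → ℝ :=
  fun x => if x = (fun _ => 0) then 1 else 0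

noncomputable def delta0bar (M : ℕ) : Fin (M+1) → ℝ :=
  fun a => if a = 0 then 1 else 0

noncomputable def transientP (n M : ℕ) (lam : Fin n → ℝ) (mu qhat t : ℝ)
    (x : Fin n → Fin (M+1)) : ℝ :=
  ∑' k : ℕ, Real.exp (-(qhat * t)) * (qhat * t) ^ k / (Nat.factorial k) *
    Matrix.vecMul (delta0 n M) ((Pmat n M lam mu qhat) ^ k) x

noncomputable def transientPbar (M : ℕ) (lam mu qhat t : ℝ) (a : Fin (M+1)) : ℝ :=
  ∑' k : ℕ, Real.exp (-(qhat * t)) * (qhat * t) ^ k / (Nat.factorial k) *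
    Matrix.vecMul (delta0bar M) ((PbarMat M lam mu qhat) ^ k) a

namespace OEF
open Finset

variable {n M : ℕ}

def nxt (M : ℕ) (a : Fin (M+1)) : Fin (M+1) := ⟨min ((a:ℕ)+1) M, by omega⟩

lemma nxt_val {a : Fin (M+1)} (h : (a:ℕ) < M) : ((nxt M a : Fin (M+1)) : ℕ) = (a:ℕ) + 1 := by
  simp [nxt]; omega

lemma incr_iff (x y : Fin n → Fin (M+1)) (j : Fin n) :
    ((y j : ℕ) = (x j : ℕ) + 1 ∧ ∀ k, k ≠ j → y k = x k) ↔
      ((x j : ℕ) < M ∧ y = Function.update x j (nxt M (x j))) := by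
  constructor
  · rintro ⟨h1, h2⟩
    have hlt : (x j : ℕ) < M := by have := (y j).isLt; omega
    refine ⟨hlt, funext fun k => ?_⟩
    by_cases hk : k = j
    · subst hk
      rw [Function.update_self]
      exact Fin.ext (by rw [h1, nxt_val hlt])
    · rw [Function.update_of_ne hk]; exact h2 k hk
  · rintro ⟨hlt, rfl⟩
    refine ⟨?_, fun k hk => Function.update_of_ne hk _ _⟩
    rw [Function.update_self, nxt_val hlt]

lemma sum_ite_unique {α : Type*} [Fintype α] [DecidableEq α]
    (p : α → Prop) [DecidablePred p] (q : α → Prop) [DecidablePred q]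
    (u : α) (c : ℝ) (hq : ∀ y, q y ↔ y = u) :
    ∑ y : α, (if p y then (if q y then c else 0) else 0) = if p u then c else 0 := by
  have h : ∀ y, (if p y then (if q y then c else 0) else 0)
      = if y = u then (if p u then c else 0) else 0 := by
    intro y
    by_cases hy : y = u
    · subst hy; simp [hq]
    · simp [hq, hy]
  simp_rw [h]
  simp

lemma sum_Qoff (lam : Fin n → ℝ) (mu : ℝ) (x : Fin n → Fin (M+1))
    (p : (Fin n → Fin (M+1)) → Prop) [DecidablePred p] :
    ∑ y ∈ univ.filter p, Qoff n M lam mu x y =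
      (∑ j : Fin n,
        if (x j : ℕ) < M ∧ p (Function.update x j (nxt M (x j))) then lam j else 0)
      + (if p (fun _ => 0) ∧ x ≠ (fun _ => 0) then mu else 0) := by
  rw [Finset.sum_filter]
  unfold Qoff
  have split : ∀ y, (if p y then
      ((∑ j : Fin n, if (y j : ℕ) = (x j : ℕ) + 1 ∧ (∀ k, k ≠ j → y k = x k) then lam j else 0)
        + (if y = (fun _ => 0) ∧ x ≠ (fun _ => 0) then mu else 0)) else 0)
      = (∑ j : Fin n, if p y then
            (if (y j : ℕ) = (x j : ℕ) + 1 ∧ (∀ k, k ≠ j → y k = x k) then lam j else 0) else 0)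
        + (if p y then (if y = (fun _ => 0) ∧ x ≠ (fun _ => 0) then mu else 0) else 0) := by
    intro y; split_ifs with h <;> simp
  simp_rw [split]
  rw [Finset.sum_add_distrib]
  congr 1
  · rw [Finset.sum_comm]
    refine Finset.sum_congr rfl fun j _ => ?_
    by_cases hlt : (x j : ℕ) < M
    · rw [sum_ite_unique p _ (Function.update x j (nxt M (x j))) (lam j)
        (fun y => by rw [incr_iff]; simp [hlt])]
      simp [hlt]
    · have : ∀ y : Fin n → Fin (M+1),
          ¬ ((y j : ℕ) = (x j : ℕ) + 1 ∧ (∀ k, k ≠ j → y k = x k)) := by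
        intro y hy; exact hlt ((incr_iff x y j).1 hy).1
      simp [this, hlt]
  · by_cases hx : x ≠ (fun _ => 0)
    · rw [sum_ite_unique p _ (fun _ => 0) mu (fun y => by simp [hx])]
      simp [hx]
    · simp [hx]

lemma update_ne_self {x : Fin n → Fin (M+1)} {j : Fin n} (hlt : (x j : ℕ) < M) :
    Function.update x j (nxt M (x j)) ≠ x := by
  intro h
  have := congrFun h j
  rw [Function.update_self] at this
  have := congrArg (Fin.val) this
  rw [nxt_val hlt] at this
  omega

lemma erase_eq_filter_ne (x : Fin n → Fin (M+1)) :
    (univ.erase x) = univ.filter (fun y => y ≠ x) := by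
  ext y; simp [Finset.mem_erase]

lemma sum_Qoff_erase (lam : Fin n → ℝ) (mu : ℝ) (x : Fin n → Fin (M+1)) :
    ∑ z ∈ univ.erase x, Qoff n M lam mu x z =
      (∑ j : Fin n, if (x j : ℕ) < M then lam j else 0)
      + (if x ≠ (fun _ => 0) then mu else 0) := by
  rw [erase_eq_filter_ne, sum_Qoff]
  congr 1
  · refine Finset.sum_congr rfl fun j _ => ?_
    by_cases hlt : (x j : ℕ) < M
    · simp [hlt, update_ne_self hlt]
    · simp [hlt]
  · by_cases hx : x = (fun _ => 0)
    · simp [hx]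
    · have h2 : (fun _ => (0:Fin (M+1))) ≠ x := fun h => hx h.symm
      simp [hx, h2]

lemma Qgen_diag (lam : Fin n → ℝ) (mu : ℝ) (x : Fin n → Fin (M+1)) :
    Qgen n M lam mu x x =
      -((∑ j : Fin n, if (x j : ℕ) < M then lam j else 0)
        + (if x ≠ (fun _ => 0) then mu else 0)) := by
  rw [Qgen, if_pos rfl, sum_Qoff_erase]

lemma Qbar_diag_sum (lam mu : ℝ) (a : Fin (M+1)) :
    ∑ c ∈ univ.erase a, QbarOff M lam mu a c =
      (if (a : ℕ) < M then lam else 0) + (if a ≠ 0 then mu else 0) := by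
  have he : (univ.erase a) = univ.filter (fun c => c ≠ a) := by
    ext c; simp [Finset.mem_erase]
  rw [he, Finset.sum_filter]
  unfold QbarOff
  have split : ∀ c : Fin (M+1), (if c ≠ a then
      ((if (c : ℕ) = (a : ℕ) + 1 then lam else 0) + (if c = 0 ∧ a ≠ 0 then mu else 0)) else 0)
      = (if c ≠ a then (if (c : ℕ) = (a : ℕ) + 1 then lam else 0) else 0)
        + (if c ≠ a then (if c = 0 ∧ a ≠ 0 then mu else 0) else 0) := by
    intro c; split_ifs <;> simp
  simp_rw [split]
  rw [Finset.sum_add_distrib]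
  congr 1
  · by_cases hlt : (a : ℕ) < M
    · have hiff : ∀ c : Fin (M+1), ((c:ℕ) = (a:ℕ) + 1) ↔ c = nxt M a := by
        intro c
        constructor
        · intro h; exact Fin.ext (by rw [h, nxt_val hlt])
        · intro h; rw [h, nxt_val hlt]
      have hne : nxt M a ≠ a := by
        intro h
        have := congrArg Fin.val h
        rw [nxt_val hlt] at this; omega
      rw [sum_ite_unique (fun c => c ≠ a) _ (nxt M a) lam hiff]
      simp [hlt, hne]
    · have : ∀ c : Fin (M+1), ¬ ((c:ℕ) = (a:ℕ) + 1) := by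
        intro c h; have := c.isLt; omega
      simp [this, hlt]
  · by_cases ha : a = 0
    · simp [ha]
    · have hiff : ∀ c : Fin (M+1), (c = 0 ∧ a ≠ 0) ↔ c = 0 := by
        intro c; simp [ha]
      rw [sum_ite_unique (fun c => c ≠ a) _ 0 mu hiff]
      simp [ha, Ne.symm ha]

lemma Qbar_diag (lam mu : ℝ) (a : Fin (M+1)) :
    Qbar M lam mu a a =
      -((if (a : ℕ) < M then lam else 0) + (if a ≠ 0 then mu else 0)) := by
  rw [Qbar, if_pos rfl, Qbar_diag_sum]

lemma fiber_Qgen (lam : Fin n → ℝ) (mu : ℝ) (i : Fin n) (x : Fin n → Fin (M+1))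
    (b : Fin (M+1)) :
    ∑ y ∈ univ.filter (fun y => y i = b), Qgen n M lam mu x y
      = Qbar M (lam i) mu (x i) b := by
  by_cases hb : b = x i
  · -- diagonal lumped case
    subst hb
    have hx : x ∈ univ.filter (fun y => y i = x i) := by simp
    rw [← Finset.add_sum_erase _ _ hx]
    have he : (univ.filter (fun y => y i = x i)).erase x
        = univ.filter (fun y => (y i = x i ∧ y ≠ x)) := by
      ext y; simp [Finset.mem_erase]; tauto
    have hQoff : ∀ y ∈ (univ.filter (fun y => y i = x i)).erase x,
        Qgen n M lam mu x y = Qoff n M lam mu x y := by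
      intro y hy
      have : y ≠ x := (Finset.mem_erase.1 hy).1
      rw [Qgen, if_neg (fun h => this h.symm)]
    rw [Finset.sum_congr rfl hQoff, he, sum_Qoff, Qgen_diag, Qbar_diag]
    have hs1 : ∀ j : Fin n,
        (if (x j : ℕ) < M ∧ ((Function.update x j (nxt M (x j))) i = x i
            ∧ Function.update x j (nxt M (x j)) ≠ x) then lam j else 0)
        = if ((x j : ℕ) < M ∧ j ≠ i) then lam j else 0 := by
      intro j
      by_cases hj : j = i
      · subst hj
        by_cases hlt : (x j : ℕ) < M
        · have : Function.update x j (nxt M (x j)) j ≠ x j := by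
            rw [Function.update_self]
            intro h
            have := congrArg Fin.val h
            rw [nxt_val hlt] at this; omega
          simp [hlt, this]
        · simp [hlt]
      · by_cases hlt : (x j : ℕ) < M
        · simp [hlt, hj, Function.update_of_ne (show i ≠ j from fun h => hj h.symm),
            update_ne_self hlt]
        · simp [hlt]
    simp_rw [hs1]
    have hs2 : ∑ j : Fin n, (if ((x j : ℕ) < M ∧ j ≠ i) then lam j else 0)
        + (if (x i : ℕ) < M then lam i else 0)
        = ∑ j : Fin n, (if (x j : ℕ) < M then lam j else 0) := by
      have : (if (x i : ℕ) < M then lam i else 0)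
          = ∑ j : Fin n, (if j = i then (if (x j : ℕ) < M then lam j else 0) else 0) := by
        rw [Finset.sum_ite_eq' univ i (fun j => if (x j : ℕ) < M then lam j else 0)]
        simp
      rw [this, ← Finset.sum_add_distrib]
      refine Finset.sum_congr rfl fun j _ => ?_
      by_cases hj : j = i <;> by_cases hlt : (x j : ℕ) < M <;> simp [hj, hlt]
    have hmu : (if (((fun _ => (0:Fin (M+1))) i = x i ∧ (fun _ => (0:Fin (M+1))) ≠ x)
          ∧ x ≠ (fun _ => 0)) then mu else 0)
        - (if x ≠ (fun _ => 0) then mu else 0)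
        = - (if x i ≠ 0 then mu else 0) := by
      have hA : (((fun _ => (0:Fin (M+1))) i = x i ∧ (fun _ => (0:Fin (M+1))) ≠ x)
          ∧ x ≠ (fun _ => 0)) ↔ (x i = 0 ∧ x ≠ (fun _ => 0)) := by
        constructor
        · rintro ⟨⟨h1, _⟩, h3⟩; exact ⟨h1.symm, h3⟩
        · rintro ⟨h1, h2⟩; exact ⟨⟨h1.symm, fun h => h2 h.symm⟩, h2⟩
      rw [if_congr hA rfl rfl]
      by_cases hxi : x i = 0
      · by_cases hx0 : x = (fun _ => 0)
        · simp [hxi, hx0]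
        · simp [hxi, hx0]
      · have hx0 : x ≠ (fun _ => 0) := fun h => hxi (by rw [h])
        simp [hxi, hx0]
    linarith [hs2, hmu]
  · -- off-diagonal lumped case
    have hQoff : ∀ y ∈ univ.filter (fun y => y i = b),
        Qgen n M lam mu x y = Qoff n M lam mu x y := by
      intro y hy
      have hyb : y i = b := (Finset.mem_filter.1 hy).2
      have : x ≠ y := by
        intro h; exact hb (by rw [← hyb, ← h])
      rw [Qgen, if_neg this]
    rw [Finset.sum_congr rfl hQoff, sum_Qoff]
    have hne : ¬ (x i = b) := fun h => hb h.symm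
    rw [Qbar, if_neg hne, QbarOff]
    congr 1
    · -- student part
      have hs1 : ∀ j : Fin n,
          (if (x j : ℕ) < M ∧ (Function.update x j (nxt M (x j))) i = b then lam j else 0)
          = if j = i then (if ((b:ℕ) = (x i : ℕ) + 1) then lam j else 0) else 0 := by
        intro j
        by_cases hj : j = i
        · subst hj
          by_cases hlt : (x j : ℕ) < M
          · have hup : (Function.update x j (nxt M (x j))) j = nxt M (x j) :=
              Function.update_self _ _ _
            by_cases hbe : (b : ℕ) = (x j : ℕ) + 1
            · have : nxt M (x j) = b := Fin.ext (by rw [nxt_val hlt, hbe])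
              simp [hlt, hup, this, hbe]
            · have : nxt M (x j) ≠ b := by
                intro h
                exact hbe (by rw [← h, nxt_val hlt])
              simp [hlt, hup, this, hbe]
          · have hbe : ¬ ((b : ℕ) = (x j : ℕ) + 1) := by
              have := b.isLt; omega
            simp [hlt, hbe]
        · have hup : (Function.update x j (nxt M (x j))) i = x i :=
            Function.update_of_ne (fun h => hj h.symm) _ _
          have hcond : ¬ ((x j : ℕ) < M ∧ (Function.update x j (nxt M (x j))) i = b) := by
            rintro ⟨_, h2⟩
            rw [hup] at h2
            exact hb h2.symm
          simp [hj, hcond]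
      simp_rw [hs1]
      rw [Finset.sum_ite_eq' univ i (fun j => if ((b:ℕ) = (x i : ℕ) + 1) then lam j else 0)]
      simp
    · -- instructor part
      have hA : ((fun _ => (0:Fin (M+1))) i = b ∧ x ≠ (fun _ => 0)) ↔ (b = 0 ∧ x i ≠ 0) := by
        constructor
        · rintro ⟨h1, _⟩
          refine ⟨h1.symm, ?_⟩
          intro h; exact hb (by rw [h, ← h1])
        · rintro ⟨h1, h2⟩
          refine ⟨h1.symm, ?_⟩
          intro h; exact h2 (by rw [h])
      rw [if_congr hA rfl rfl]

lemma Pmat_apply (lam : Fin n → ℝ) (mu qhat : ℝ) (x y : Fin n → Fin (M+1)) :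
    Pmat n M lam mu qhat x y
      = (if x = y then 1 else 0) + qhat⁻¹ * Qgen n M lam mu x y := by
  simp [Pmat, Matrix.add_apply, Matrix.smul_apply, Matrix.one_apply, smul_eq_mul]

lemma PbarMat_apply (lam mu qhat : ℝ) (a b : Fin (M+1)) :
    PbarMat M lam mu qhat a b
      = (if a = b then 1 else 0) + qhat⁻¹ * Qbar M lam mu a b := by
  simp [PbarMat, Matrix.add_apply, Matrix.smul_apply, Matrix.one_apply, smul_eq_mul]

lemma fiber_Pmat (lam : Fin n → ℝ) (mu qhat : ℝ) (i : Fin n) (x : Fin n → Fin (M+1))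
    (b : Fin (M+1)) :
    ∑ y ∈ univ.filter (fun y => y i = b), Pmat n M lam mu qhat x y
      = PbarMat M (lam i) mu qhat (x i) b := by
  simp_rw [Pmat_apply]
  rw [Finset.sum_add_distrib, ← Finset.mul_sum, fiber_Qgen, PbarMat_apply]
  congr 1
  have h1 : ∀ y : Fin n → Fin (M+1),
      (if y i = b then (if x = y then (1:ℝ) else 0) else 0)
      = if y = x then (if x i = b then (1:ℝ) else 0) else 0 := by
    intro y
    by_cases hy : y = x
    · subst hy; simp
    · have hxy : x ≠ y := fun h => hy h.symm
      simp [hy, hxy]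
  rw [Finset.sum_filter]
  simp_rw [h1]
  simp

lemma vecMul_eval {A : Type*} [Fintype A] [DecidableEq A]
    (B : Matrix A A ℝ) (u : A) (d : A -> ℝ) (hd : forall z, d z = if z = u then 1 else 0)
    (x : A) : Matrix.vecMul d B x = B u x := by
  simp only [Matrix.vecMul, dotProduct]
  have h2 : forall z, d z * B z x = if z = u then B z x else 0 := by
    intro z; rw [hd z]; split_ifs <;> simp
  simp_rw [h2]
  simp

lemma push_vecMul (lam : Fin n → ℝ) (mu qhat : ℝ) (i : Fin n)
    (v : (Fin n → Fin (M+1)) → ℝ) (a : Fin (M+1)) :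
    ∑ x ∈ univ.filter (fun x => x i = a), Matrix.vecMul v (Pmat n M lam mu qhat) x
      = Matrix.vecMul (fun c => ∑ x ∈ univ.filter (fun x => x i = c), v x)
          (PbarMat M (lam i) mu qhat) a := by
  have h1 : ∀ x, Matrix.vecMul v (Pmat n M lam mu qhat) x
      = ∑ z, v z * Pmat n M lam mu qhat z x := by
    intro x; simp [Matrix.vecMul, dotProduct]
  simp_rw [h1]
  rw [Finset.sum_comm]
  have h2 : ∀ z, ∑ x ∈ univ.filter (fun x => x i = a), v z * Pmat n M lam mu qhat z x
      = v z * PbarMat M (lam i) mu qhat (z i) a := by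
    intro z
    rw [← Finset.mul_sum, fiber_Pmat]
  simp_rw [h2]
  rw [← Finset.sum_fiberwise univ (fun z => z i)
    (fun z => v z * PbarMat M (lam i) mu qhat (z i) a)]
  have h3 : ∀ c : Fin (M+1), ∑ z ∈ univ.filter (fun z => z i = c),
      v z * PbarMat M (lam i) mu qhat (z i) a
      = (∑ z ∈ univ.filter (fun z => z i = c), v z) * PbarMat M (lam i) mu qhat c a := by
    intro c
    rw [Finset.sum_mul]
    refine Finset.sum_congr rfl fun z hz => ?_
    rw [(Finset.mem_filter.1 hz).2]
  simp_rw [h3]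
  simp [Matrix.vecMul, dotProduct]

lemma push_pow (lam : Fin n → ℝ) (mu qhat : ℝ) (i : Fin n) (k : ℕ) (a : Fin (M+1)) :
    ∑ x ∈ univ.filter (fun x => x i = a),
        Matrix.vecMul (delta0 n M) ((Pmat n M lam mu qhat) ^ k) x
      = Matrix.vecMul (delta0bar M) ((PbarMat M (lam i) mu qhat) ^ k) a := by
  induction k generalizing a with
  | zero =>
    simp only [pow_zero, Matrix.vecMul_one]
    unfold delta0 delta0bar
    by_cases ha : a = 0
    · subst ha
      have : ∀ x ∈ univ.filter (fun x : Fin n → Fin (M+1) => x i = 0),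
          (if x = (fun _ => 0) then (1:ℝ) else 0)
          = if x = (fun _ => 0) then 1 else 0 := fun _ _ => rfl
      rw [Finset.sum_filter]
      have h1 : ∀ x : Fin n → Fin (M+1),
          (if x i = 0 then (if x = (fun _ => 0) then (1:ℝ) else 0) else 0)
          = if x = (fun _ => 0) then 1 else 0 := by
        intro x
        by_cases hx : x = (fun _ => 0)
        · subst hx; simp
        · simp [hx]
      simp_rw [h1]
      simp
    · have h1 : ∀ x : Fin n → Fin (M+1),
          (if x i = a then (if x = (fun _ => 0) then (1:ℝ) else 0) else 0) = 0 := by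
        intro x
        by_cases hx : x = (fun _ => 0)
        · subst hx
          have h0 : ¬ ((fun _ => (0:Fin (M+1))) i = a) := fun h => ha h.symm
          simp [h0]
        · simp [hx]
      rw [Finset.sum_filter]
      simp_rw [h1]
      simp [ha]
  | succ k ih =>
    rw [pow_succ, pow_succ, ← Matrix.vecMul_vecMul, ← Matrix.vecMul_vecMul]
    rw [push_vecMul]
    have : (fun c => ∑ x ∈ univ.filter (fun x => x i = c),
        Matrix.vecMul (delta0 n M) ((Pmat n M lam mu qhat) ^ k) x)
        = Matrix.vecMul (delta0bar M) ((PbarMat M (lam i) mu qhat) ^ k) := by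
      funext c; exact ih c
    rw [this]

lemma Qoff_nonneg (lam : Fin n → ℝ) (mu : ℝ) (hlam : ∀ j, 0 ≤ lam j) (hmu : 0 ≤ mu)
    (x y : Fin n → Fin (M+1)) : 0 ≤ Qoff n M lam mu x y := by
  unfold Qoff
  refine add_nonneg (Finset.sum_nonneg fun j _ => ?_) ?_ <;> split_ifs
  · exact hlam j
  · exact le_refl 0
  · exact hmu
  · exact le_refl 0

lemma Qgen_rowsum (lam : Fin n → ℝ) (mu : ℝ) (x : Fin n → Fin (M+1)) :
    ∑ y, Qgen n M lam mu x y = 0 := by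
  rw [← Finset.add_sum_erase _ _ (Finset.mem_univ x)]
  have h1 : ∀ y ∈ univ.erase x, Qgen n M lam mu x y = Qoff n M lam mu x y := by
    intro y hy
    have : x ≠ y := fun h => (Finset.mem_erase.1 hy).1 h.symm
    rw [Qgen, if_neg this]
  rw [Finset.sum_congr rfl h1, Qgen, if_pos rfl]
  ring

lemma Pmat_rowsum (lam : Fin n → ℝ) (mu qhat : ℝ) (x : Fin n → Fin (M+1)) :
    ∑ y, Pmat n M lam mu qhat x y = 1 := by
  simp_rw [Pmat_apply]
  rw [Finset.sum_add_distrib, ← Finset.mul_sum, Qgen_rowsum, mul_zero, add_zero]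
  simp

lemma Pmat_nonneg (lam : Fin n → ℝ) (mu qhat : ℝ)
    (hlam : ∀ j, 0 ≤ lam j) (hmu : 0 ≤ mu) (hq : 0 < qhat)
    (hqb : ∀ x : Fin n → Fin (M+1), -(Qgen n M lam mu x x) ≤ qhat)
    (x y : Fin n → Fin (M+1)) : 0 ≤ Pmat n M lam mu qhat x y := by
  rw [Pmat_apply]
  by_cases hxy : x = y
  · subst hxy
    rw [if_pos rfl]
    have h1 : -qhat ≤ Qgen n M lam mu x x := by linarith [hqb x]
    have h2 : qhat⁻¹ * (-qhat) ≤ qhat⁻¹ * Qgen n M lam mu x x :=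
      mul_le_mul_of_nonneg_left h1 (inv_nonneg.mpr hq.le)
    have h3 : qhat⁻¹ * (-qhat) = -1 := by
      field_simp
    linarith
  · rw [if_neg hxy, Qgen, if_neg hxy]
    have := Qoff_nonneg lam mu hlam hmu x y
    positivity

lemma Ppow_nonneg_rowsum (lam : Fin n → ℝ) (mu qhat : ℝ)
    (hlam : ∀ j, 0 ≤ lam j) (hmu : 0 ≤ mu) (hq : 0 < qhat)
    (hqb : ∀ x : Fin n → Fin (M+1), -(Qgen n M lam mu x x) ≤ qhat) (k : ℕ) :
    (∀ x y, 0 ≤ ((Pmat n M lam mu qhat) ^ k) x y)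
      ∧ (∀ x, ∑ y, ((Pmat n M lam mu qhat) ^ k) x y = 1) := by
  induction k with
  | zero =>
    constructor
    · intro x y
      simp only [pow_zero, Matrix.one_apply]
      split_ifs <;> norm_num
    · intro x; simp [Matrix.one_apply]
  | succ k ih =>
    obtain ⟨ih1, ih2⟩ := ih
    constructor
    · intro x y
      rw [pow_succ, Matrix.mul_apply]
      exact Finset.sum_nonneg fun z _ =>
        mul_nonneg (ih1 x z) (Pmat_nonneg lam mu qhat hlam hmu hq hqb z y)
    · intro x
      simp_rw [pow_succ, Matrix.mul_apply]
      rw [Finset.sum_comm]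
      have : ∀ z, ∑ y, ((Pmat n M lam mu qhat) ^ k) x z * Pmat n M lam mu qhat z y
          = ((Pmat n M lam mu qhat) ^ k) x z := by
        intro z
        rw [← Finset.mul_sum, Pmat_rowsum, mul_one]
      simp_rw [this]
      exact ih2 x

lemma Ppow_le_one (lam : Fin n → ℝ) (mu qhat : ℝ)
    (hlam : ∀ j, 0 ≤ lam j) (hmu : 0 ≤ mu) (hq : 0 < qhat)
    (hqb : ∀ x : Fin n → Fin (M+1), -(Qgen n M lam mu x x) ≤ qhat) (k : ℕ)
    (x y : Fin n → Fin (M+1)) : ((Pmat n M lam mu qhat) ^ k) x y ≤ 1 := by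
  obtain ⟨h1, h2⟩ := Ppow_nonneg_rowsum lam mu qhat hlam hmu hq hqb k
  calc ((Pmat n M lam mu qhat) ^ k) x y
      ≤ ∑ z, ((Pmat n M lam mu qhat) ^ k) x z :=
        Finset.single_le_sum (fun z _ => h1 x z) (Finset.mem_univ y)
    _ = 1 := h2 x

section Final

variable (lam : Fin n → ℝ) (mu qhat : ℝ)

lemma vecMul_delta0 (k : ℕ) (x : Fin n → Fin (M+1)) :
    Matrix.vecMul (delta0 n M) ((Pmat n M lam mu qhat) ^ k) x
      = ((Pmat n M lam mu qhat) ^ k) (fun _ => 0) x :=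
  vecMul_eval _ _ _ (fun _ => rfl) x

variable (hlam : ∀ j, 0 ≤ lam j) (hmu : 0 ≤ mu) (hq : 0 < qhat)
  (hqb : ∀ x : Fin n → Fin (M+1), -(Qgen n M lam mu x x) ≤ qhat)

include hlam hmu hq hqb

lemma W_nonneg (k : ℕ) (x : Fin n → Fin (M+1)) :
    0 ≤ Matrix.vecMul (delta0 n M) ((Pmat n M lam mu qhat) ^ k) x := by
  rw [vecMul_delta0]
  exact (Ppow_nonneg_rowsum lam mu qhat hlam hmu hq hqb k).1 _ _

lemma W_le_one (k : ℕ) (x : Fin n → Fin (M+1)) :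
    Matrix.vecMul (delta0 n M) ((Pmat n M lam mu qhat) ^ k) x ≤ 1 := by
  rw [vecMul_delta0]
  exact Ppow_le_one lam mu qhat hlam hmu hq hqb k _ _

lemma Wbar_nonneg (i : Fin n) (k : ℕ) (a : Fin (M+1)) :
    0 ≤ Matrix.vecMul (delta0bar M) ((PbarMat M (lam i) mu qhat) ^ k) a := by
  rw [← push_pow]
  exact Finset.sum_nonneg fun x _ => W_nonneg lam mu qhat hlam hmu hq hqb k x

lemma Wbar_le_one (i : Fin n) (k : ℕ) (a : Fin (M+1)) :
    Matrix.vecMul (delta0bar M) ((PbarMat M (lam i) mu qhat) ^ k) a ≤ 1 := by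
  rw [← push_pow]
  have h1 : ∑ x, Matrix.vecMul (delta0 n M) ((Pmat n M lam mu qhat) ^ k) x = 1 := by
    simp_rw [vecMul_delta0]
    exact (Ppow_nonneg_rowsum lam mu qhat hlam hmu hq hqb k).2 _
  calc ∑ x ∈ univ.filter (fun x => x i = a),
        Matrix.vecMul (delta0 n M) ((Pmat n M lam mu qhat) ^ k) x
      ≤ ∑ x, Matrix.vecMul (delta0 n M) ((Pmat n M lam mu qhat) ^ k) x :=
        Finset.sum_le_sum_of_subset_of_nonneg (Finset.filter_subset _ _)
          (fun x _ _ => W_nonneg lam mu qhat hlam hmu hq hqb k x)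
    _ = 1 := h1

end Final

lemma summable_c (qhat t : ℝ) :
    Summable (fun k : ℕ => Real.exp (-(qhat * t)) * (qhat * t) ^ k / (Nat.factorial k)) := by
  have := (Real.summable_pow_div_factorial (qhat * t)).mul_left (Real.exp (-(qhat * t)))
  exact this.congr fun k => by rw [mul_div_assoc]

lemma c_nonneg (qhat t : ℝ) (hq : 0 < qhat) (ht : 0 ≤ t) (k : ℕ) :
    0 ≤ Real.exp (-(qhat * t)) * (qhat * t) ^ k / (Nat.factorial k) := by
  have h1 : (0:ℝ) ≤ qhat * t := mul_nonneg hq.le ht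
  positivity

lemma main_key (lam : Fin n → ℝ) (mu qhat : ℝ)
    (hlam : ∀ j, 0 ≤ lam j) (hmu : 0 ≤ mu) (hq : 0 < qhat)
    (hqb : ∀ x : Fin n → Fin (M+1), -(Qgen n M lam mu x x) ≤ qhat)
    (i : Fin n) (g : Fin (M+1) → ℝ) (t : ℝ) (ht : 0 ≤ t) :
    ∑ x : Fin n → Fin (M+1), g (x i) * transientP n M lam mu qhat t x
      = ∑ a : Fin (M+1), g a * transientPbar M (lam i) mu qhat t a := by
  set c : ℕ → ℝ :=
    fun k => Real.exp (-(qhat * t)) * (qhat * t) ^ k / (Nat.factorial k) with hc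
  set W : ℕ → (Fin n → Fin (M+1)) → ℝ :=
    fun k x => Matrix.vecMul (delta0 n M) ((Pmat n M lam mu qhat) ^ k) x with hW
  set Wb : ℕ → Fin (M+1) → ℝ :=
    fun k a => Matrix.vecMul (delta0bar M) ((PbarMat M (lam i) mu qhat) ^ k) a with hWb
  have hsumW : ∀ x, Summable (fun k => c k * W k x) := by
    intro x
    refine Summable.of_nonneg_of_le (fun k => ?_) (fun k => ?_) (summable_c qhat t)
    · exact mul_nonneg (c_nonneg qhat t hq ht k) (W_nonneg lam mu qhat hlam hmu hq hqb k x)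
    · exact mul_le_of_le_one_right (c_nonneg qhat t hq ht k)
        (W_le_one lam mu qhat hlam hmu hq hqb k x)
  have hsumWb : ∀ a, Summable (fun k => c k * Wb k a) := by
    intro a
    refine Summable.of_nonneg_of_le (fun k => ?_) (fun k => ?_) (summable_c qhat t)
    · exact mul_nonneg (c_nonneg qhat t hq ht k)
        (Wbar_nonneg lam mu qhat hlam hmu hq hqb i k a)
    · exact mul_le_of_le_one_right (c_nonneg qhat t hq ht k)
        (Wbar_le_one lam mu qhat hlam hmu hq hqb i k a)
  have hTP : ∀ x, transientP n M lam mu qhat t x = ∑' k, c k * W k x := fun x => rfl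
  have hTPb : ∀ a, transientPbar M (lam i) mu qhat t a = ∑' k, c k * Wb k a := fun a => rfl
  calc ∑ x : Fin n → Fin (M+1), g (x i) * transientP n M lam mu qhat t x
      = ∑ x : Fin n → Fin (M+1), ∑' k, g (x i) * (c k * W k x) := by
        refine Finset.sum_congr rfl fun x _ => ?_
        rw [hTP, tsum_mul_left]
    _ = ∑' k, ∑ x : Fin n → Fin (M+1), g (x i) * (c k * W k x) :=
        (Summable.tsum_finsetSum (fun x _ => ((hsumW x).mul_left (g (x i))))).symm
    _ = ∑' k, ∑ a : Fin (M+1), g a * (c k * Wb k a) := by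
        refine tsum_congr fun k => ?_
        rw [← Finset.sum_fiberwise univ (fun x : Fin n → Fin (M+1) => x i)
          (fun x => g (x i) * (c k * W k x))]
        refine Finset.sum_congr rfl fun a _ => ?_
        have h1 : ∀ x ∈ univ.filter (fun x : Fin n → Fin (M+1) => x i = a),
            g (x i) * (c k * W k x) = g a * (c k * W k x) := by
          intro x hx
          rw [(Finset.mem_filter.1 hx).2]
        rw [Finset.sum_congr rfl h1, ← Finset.mul_sum]
        congr 1
        rw [← Finset.mul_sum]
        congr 1
        exact push_pow lam mu qhat i k a
    _ = ∑ a : Fin (M+1), ∑' k, g a * (c k * Wb k a) :=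
        Summable.tsum_finsetSum (fun a _ => ((hsumWb a).mul_left (g a)))
    _ = ∑ a : Fin (M+1), g a * transientPbar M (lam i) mu qhat t a := by
        refine Finset.sum_congr rfl fun a _ => ?_
        rw [hTPb, tsum_mul_left]

end OEF

/-- The expected transient net reward of student `i` computed in the
original OEF chain equals that computed in its lumped chain, for every `t ≥ 0`.
The net reward in state `x` is `min(xᵢ,m)·δ^{ln μ} − α·xᵢ`. -/
theorem expected_transient_net_reward_student_eq (n M : ℕ) (hn : 1 ≤ n) (hM : 1 ≤ M)
    (lam : Fin n → ℝ) (hlam : ∀ j, 0 < lam j) (mu : ℝ) (hmu : 0 < mu)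
    (qhat : ℝ) (hq : 0 < qhat)
    (hqbound : ∀ x : Fin n → Fin (M+1), -(Qgen n M lam mu x x) ≤ qhat)
    (i : Fin n) (alpha : ℝ) (halpha : 0 < alpha ∧ alpha < 1)
    (m : ℕ) (hm : 1 ≤ m ∧ m ≤ M)
    (delta : ℝ) (hdelta : 0 < delta ∧ delta < 1) :
    ∀ t : ℝ, 0 ≤ t →
      ∑ x : Fin n → Fin (M+1),
          (((min (x i : ℕ) m : ℕ) : ℝ) * delta ^ Real.log mu - alpha * ((x i : ℕ) : ℝ))
            * transientP n M lam mu qhat t x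
        = ∑ a : Fin (M+1),
            (((min (a : ℕ) m : ℕ) : ℝ) * delta ^ Real.log mu - alpha * ((a : ℕ) : ℝ))
              * transientPbar M (lam i) mu qhat t a := by
  intro t ht
  exact OEF.main_key lam mu qhat (fun j => (hlam j).le) hmu.le hq hqbound i
    (fun a => ((min (a : ℕ) m : ℕ) : ℝ) * delta ^ Real.log mu - alpha * ((a : ℕ) : ℝ)) t ht
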